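/- Let ν₁, ν_n, μ₁, μ_n be real numbers with 0 < ν₁ ≤ ν_n and 0 < μ₁ ≤ μ_n, and let a, b, c be real numbers satisfying μ₁ ≤ a ≤ μ_n, (μ₁/ν_n)² ≤ b ≤ (μ_n/ν₁)², and μ₁³/ν_n² ≤ c ≤ μ_n³/ν₁². Then b > 0 and (2/b)(√(a(a + c)) − a) ≥ 2ν₁³μ₁⁴ / (ν_n²μ_n³(√(ν₁² + μ_n²) + ν₁)). -/

import Mathlib

/-- Remark 1: If `0 < ν₁ ≤ νₙ`, `0 < μ₁ ≤ μₙ`, and the Rayleigh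
quotients satisfy `μ₁ ≤ a ≤ μₙ`, `(μ₁/νₙ)² ≤ b ≤ (μₙ/ν₁)²`, `μ₁³/νₙ² ≤ c ≤ μₙ³/ν₁²`,
then `b > 0` and `(2/b)(√(a(a+c)) - a) ≥ 2ν₁³μ₁⁴/(νₙ²μₙ³(√(ν₁² + μₙ²) + ν₁))`. -/
theorem blt_alpha_star_lower_bound (ν₁ νₙ μ₁ μₙ a b c : ℝ)
    (hν₁ : 0 < ν₁) (hν : ν₁ ≤ νₙ) (hμ₁ : 0 < μ₁) (hμ : μ₁ ≤ μₙ)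
    (ha₁ : μ₁ ≤ a) (ha₂ : a ≤ μₙ)
    (hb₁ : (μ₁ / νₙ) ^ 2 ≤ b) (hb₂ : b ≤ (μₙ / ν₁) ^ 2)
    (hc₁ : μ₁ ^ 3 / νₙ ^ 2 ≤ c) (hc₂ : c ≤ μₙ ^ 3 / ν₁ ^ 2) :
    0 < b ∧
      2 * ν₁ ^ 3 * μ₁ ^ 4 / (νₙ ^ 2 * μₙ ^ 3 * (Real.sqrt (ν₁ ^ 2 + μₙ ^ 2) + ν₁))
        ≤ (2 / b) * (Real.sqrt (a * (a + c)) - a) := by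
  have hνₙ : 0 < νₙ := lt_of_lt_of_le hν₁ hν
  have hμₙ : 0 < μₙ := lt_of_lt_of_le hμ₁ hμ
  have hb0 : 0 < b := lt_of_lt_of_le (by positivity) hb₁
  refine ⟨hb0, ?_⟩
  have ha0 : 0 < a := lt_of_lt_of_le hμ₁ ha₁
  have hc0 : 0 < c := lt_of_lt_of_le (by positivity) hc₁
  set S := Real.sqrt (a * (a + c)) with hSdef
  set T := Real.sqrt (ν₁ ^ 2 + μₙ ^ 2) with hTdef
  have hS0 : 0 ≤ S := Real.sqrt_nonneg _
  have hT0 : 0 ≤ T := Real.sqrt_nonneg _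
  have hS2 : S ^ 2 = a * (a + c) := Real.sq_sqrt (by positivity)
  have hT2 : T ^ 2 = ν₁ ^ 2 + μₙ ^ 2 := Real.sq_sqrt (by positivity)
  clear_value S T
  -- bound on S
  have hSle : S ≤ μₙ * T / ν₁ + μₙ - μₙ := by
    have h1 : a * (a + c) ≤ (μₙ * T / ν₁) ^ 2 := by
      have hcν : ν₁ ^ 2 * c ≤ μₙ ^ 3 := by
        have := (le_div_iff₀ (by positivity : (0:ℝ) < ν₁ ^ 2)).mp hc₂
        linarith
      have : (μₙ * T / ν₁) ^ 2 = μₙ ^ 2 * (ν₁ ^ 2 + μₙ ^ 2) / ν₁ ^ 2 := by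
        rw [div_pow, mul_pow, hT2]
      rw [this, le_div_iff₀ (by positivity : (0:ℝ) < ν₁ ^ 2)]
      nlinarith [mul_le_mul (mul_le_mul ha₂ ha₂ ha0.le hμₙ.le) le_rfl
          (sq_nonneg ν₁) (by positivity : (0:ℝ) ≤ μₙ * μₙ),
        mul_le_mul ha₂ hcν (by positivity) hμₙ.le]
    have := Real.sqrt_le_sqrt h1
    rw [← hSdef] at this
    simpa [Real.sqrt_sq (by positivity : (0:ℝ) ≤ μₙ * T / ν₁)] using this
  have hSle' : S ≤ μₙ * T / ν₁ := by linarith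
  -- key identity
  have hkey : S - a = a * c / (S + a) := by
    have hSa : 0 < S + a := by linarith
    rw [eq_div_iff (ne_of_gt hSa)]
    nlinarith [hS2]
  rw [hkey]
  have hDpos : 0 < S + a := by linarith
  have hTν : 0 < T + ν₁ := by positivity
  have hrw : (2 / b) * (a * c / (S + a)) = 2 * a * c / (b * (S + a)) := by
    field_simp
  rw [hrw]
  have hden2 : 0 < b * (S + a) := by positivity
  rw [div_le_div_iff₀ (by positivity) hden2]
  -- bounds
  have hbν : b * ν₁ ^ 2 ≤ μₙ ^ 2 := by
    have := mul_le_mul_of_nonneg_right hb₂ (le_of_lt (by positivity : (0:ℝ) < ν₁ ^ 2))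
    calc b * ν₁ ^ 2 ≤ (μₙ / ν₁) ^ 2 * ν₁ ^ 2 := this
      _ = μₙ ^ 2 := by field_simp
  have hSaν : ν₁ * (S + a) ≤ μₙ * (T + ν₁) := by
    have : ν₁ * S ≤ μₙ * T := by
      have := mul_le_mul_of_nonneg_left hSle' (le_of_lt hν₁)
      calc ν₁ * S ≤ ν₁ * (μₙ * T / ν₁) := this
        _ = μₙ * T := by field_simp
    have h2' : ν₁ * a ≤ μₙ * ν₁ := by
      have := mul_le_mul_of_nonneg_left ha₂ hν₁.le
      linarith
    calc ν₁ * (S + a) = ν₁ * S + ν₁ * a := by ring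
      _ ≤ μₙ * T + μₙ * ν₁ := add_le_add this h2'
      _ = μₙ * (T + ν₁) := by ring
  have hcνₙ : μ₁ ^ 3 ≤ c * νₙ ^ 2 := by
    have := mul_le_mul_of_nonneg_right hc₁ (le_of_lt (by positivity : (0:ℝ) < νₙ ^ 2))
    calc μ₁ ^ 3 = μ₁ ^ 3 / νₙ ^ 2 * νₙ ^ 2 := by field_simp
      _ ≤ c * νₙ ^ 2 := this
  -- goal : 2 * ν₁ ^ 3 * μ₁ ^ 4 * (b * (S + a)) ≤
  --        2 * a * c * (νₙ ^ 2 * μₙ ^ 3 * (T + ν₁))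
  have h1 : 2 * ν₁ ^ 3 * μ₁ ^ 4 * (b * (S + a)) ≤ 2 * μ₁ ^ 4 * μₙ ^ 3 * (T + ν₁) := by
    have e : 2 * ν₁ ^ 3 * μ₁ ^ 4 * (b * (S + a)) =
        2 * μ₁ ^ 4 * ((b * ν₁ ^ 2) * (ν₁ * (S + a))) := by ring
    rw [e]
    have h2 : (b * ν₁ ^ 2) * (ν₁ * (S + a)) ≤ μₙ ^ 2 * (μₙ * (T + ν₁)) :=
      mul_le_mul hbν hSaν (by positivity) (by positivity)
    calc 2 * μ₁ ^ 4 * ((b * ν₁ ^ 2) * (ν₁ * (S + a)))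
        ≤ 2 * μ₁ ^ 4 * (μₙ ^ 2 * (μₙ * (T + ν₁))) := by
          have := mul_le_mul_of_nonneg_left h2
            (by positivity : (0:ℝ) ≤ 2 * μ₁ ^ 4)
          linarith
      _ = 2 * μ₁ ^ 4 * μₙ ^ 3 * (T + ν₁) := by ring
  have h3 : 2 * μ₁ ^ 4 * μₙ ^ 3 * (T + ν₁) ≤ 2 * a * c * (νₙ ^ 2 * μₙ ^ 3 * (T + ν₁)) := by
    have h4 : μ₁ ^ 4 ≤ a * (c * νₙ ^ 2) := by
      calc μ₁ ^ 4 = μ₁ * μ₁ ^ 3 := by ring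
        _ ≤ a * (c * νₙ ^ 2) :=
          mul_le_mul ha₁ hcνₙ (by positivity) (le_of_lt ha0)
    have h5 := mul_le_mul_of_nonneg_right h4
      (by positivity : (0:ℝ) ≤ 2 * μₙ ^ 3 * (T + ν₁))
    calc 2 * μ₁ ^ 4 * μₙ ^ 3 * (T + ν₁)
        = μ₁ ^ 4 * (2 * μₙ ^ 3 * (T + ν₁)) := by ring
      _ ≤ a * (c * νₙ ^ 2) * (2 * μₙ ^ 3 * (T + ν₁)) := h5
      _ = 2 * a * c * (νₙ ^ 2 * μₙ ^ 3 * (T + ν₁)) := by ring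
  linarith
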